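/- Let p be a nonzero Laurent polynomial in two variables over ℤ whose y-breadth ℓ satisfies ℓ ≥ 1. Let j₀ = min{j : ∃ i, coeff p (i, j) ≠ 0} (so that j₀ + ℓ is the corresponding maximum), and let a_{j₀} and a_{j₀+ℓ} be the nonzero one-variable Laurent polynomials with coefficients coeff p (·, j₀) and coeff p (·, j₀+ℓ) respectively. Let ω ≥ 1 be an integer and set C = maxdeg(a_{j₀}) − mindeg(a_{j₀+ℓ}). Then there exists N such that for every integer n ≥ N the specialization p(t, t^{−nω}) is a nonzero one-variable Laurent polynomial whose breadth equals n·ω·ℓ + C. In particular, br(p(t, t^{−nω})) → ∞ as n → ∞. (This is the breadth computation used in the proofs of Theorem 2.1(3) and Proposition 1.9 of the paper.) -/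

import Mathlib

/-- The maximum `y`-exponent appearing in a two-variable Laurent polynomial
(junk value `0` for the zero polynomial). -/
noncomputable def ymax (p : AddMonoidAlgebra ℤ (ℤ × ℤ)) : ℤ :=
  WithBot.unbotD 0 ((p.coeff.support.image Prod.snd).max)

/-- The minimum `y`-exponent appearing in a two-variable Laurent polynomial
(junk value `0` for the zero polynomial). -/
noncomputable def ymin (p : AddMonoidAlgebra ℤ (ℤ × ℤ)) : ℤ :=
  WithTop.untopD 0 ((p.coeff.support.image Prod.snd).min)

/-- The `y`-breadth of a two-variable Laurent polynomial. -/
noncomputable def ybreadth (p : AddMonoidAlgebra ℤ (ℤ × ℤ)) : ℤ := ymax p - ymin p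

/-- The maximum degree of a one-variable Laurent polynomial (junk value `0` for `0`). -/
noncomputable def maxdeg (q : AddMonoidAlgebra ℤ ℤ) : ℤ := WithBot.unbotD 0 (q.coeff.support.max)

/-- The minimum degree of a one-variable Laurent polynomial (junk value `0` for `0`). -/
noncomputable def mindeg (q : AddMonoidAlgebra ℤ ℤ) : ℤ := WithTop.untopD 0 (q.coeff.support.min)

/-- The breadth of a one-variable Laurent polynomial:
maximum degree minus minimum degree of its support. -/
noncomputable def breadth (q : AddMonoidAlgebra ℤ ℤ) : ℤ := maxdeg q - mindeg q

/-- The coefficient `a_j(x)` of `y^j` in a two-variable Laurent polynomial `p(x,y)`: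
the one-variable Laurent polynomial whose coefficient of `x^i` is `coeff p (i, j)`. -/
noncomputable def row (p : AddMonoidAlgebra ℤ (ℤ × ℤ)) (j : ℤ) : AddMonoidAlgebra ℤ ℤ :=
  AddMonoidAlgebra.ofCoeff (Finsupp.mapDomain Prod.fst (p.coeff.filter (fun ij => ij.2 = j)))

/-- For `c : ℤ`, the specialization `p(t, t^c)`: the image of `p` under the map sending
the monomial `x^i y^j` to `t^{i + c·j}`. -/
noncomputable def specPow (c : ℤ) (p : AddMonoidAlgebra ℤ (ℤ × ℤ)) : AddMonoidAlgebra ℤ ℤ :=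
  AddMonoidAlgebra.ofCoeff (Finsupp.mapDomain (fun ij => ij.1 + c * ij.2) p.coeff)

set_option maxHeartbeats 1000000 in
lemma spec_key (p : AddMonoidAlgebra ℤ (ℤ × ℤ)) (hp : p ≠ 0) (c : ℤ)
    (hc : ∀ ij ∈ p.coeff.support, ∀ ij' ∈ p.coeff.support, ij.2 < ij'.2 →
      ij'.1 + c * ij'.2 < ij.1 + c * ij.2) :
    specPow c p ≠ 0 ∧
      breadth (specPow c p) =
        (maxdeg (row p (ymin p)) + c * ymin p)
          - (mindeg (row p (ymax p)) + c * ymax p) := by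
  classical
  have hS : p.coeff.support.Nonempty := Finsupp.support_nonempty_iff.mpr (mt AddMonoidAlgebra.coeff_eq_zero.mp hp)
  have hT : (p.coeff.support.image Prod.snd).Nonempty := hS.image _
  have hymin : ymin p = (p.coeff.support.image Prod.snd).min' hT := by
    simp only [ymin, ← Finset.coe_min' hT, WithTop.untopD_coe]
  have hymax : ymax p = (p.coeff.support.image Prod.snd).max' hT := by
    simp only [ymax, ← Finset.coe_max' hT, WithBot.unbotD_coe]
  -- injectivity on support
  have hinj : Set.InjOn (fun ij : ℤ × ℤ => ij.1 + c * ij.2) p.coeff.support := by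
    intro a ha b hb hab
    dsimp at hab
    rcases lt_trichotomy a.2 b.2 with h | h | h
    · have := hc a ha b hb h; omega
    · have h1 : a.1 = b.1 := by rw [h] at hab; linarith
      exact Prod.ext h1 h
    · have := hc b hb a ha h; omega
  have hsupp : (specPow c p).coeff.support
      = p.coeff.support.image (fun ij : ℤ × ℤ => ij.1 + c * ij.2) := by
    simp only [specPow, AddMonoidAlgebra.coeff_ofCoeff]
    exact Finsupp.mapDomain_support_of_injOn p.coeff hinj
  have hne : specPow c p ≠ 0 := by
    rw [Ne, ← AddMonoidAlgebra.coeff_eq_zero, ← Ne, ← Finsupp.support_nonempty_iff, hsupp]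
    exact hS.image _
  -- row supports
  have hrow : ∀ j : ℤ, (row p j).coeff.support
      = (p.coeff.support.filter (fun ij => ij.2 = j)).image Prod.fst := by
    intro j
    simp only [row, AddMonoidAlgebra.coeff_ofCoeff]
    rw [Finsupp.mapDomain_support_of_injOn, Finsupp.support_filter]
    intro a ha b hb hab
    rw [Finset.mem_coe, Finsupp.support_filter, Finset.mem_filter] at ha hb
    exact Prod.ext hab (ha.2.trans hb.2.symm)
  -- extreme members of the min/max rows
  obtain ⟨ij0, hij0S, hij0⟩ := Finset.mem_image.mp
    ((p.coeff.support.image Prod.snd).min'_mem hT)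
  obtain ⟨ij1, hij1S, hij1⟩ := Finset.mem_image.mp
    ((p.coeff.support.image Prod.snd).max'_mem hT)
  have hA0 : ((p.coeff.support.filter
      (fun ij => ij.2 = (p.coeff.support.image Prod.snd).min' hT)).image Prod.fst).Nonempty :=
    ⟨ij0.1, Finset.mem_image.mpr ⟨ij0, Finset.mem_filter.mpr ⟨hij0S, hij0⟩, rfl⟩⟩
  have hA1 : ((p.coeff.support.filter
      (fun ij => ij.2 = (p.coeff.support.image Prod.snd).max' hT)).image Prod.fst).Nonempty :=
    ⟨ij1.1, Finset.mem_image.mpr ⟨ij1, Finset.mem_filter.mpr ⟨hij1S, hij1⟩, rfl⟩⟩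
  set jmin := (p.coeff.support.image Prod.snd).min' hT with hjmin
  set jmax := (p.coeff.support.image Prod.snd).max' hT with hjmax
  set M0 := ((p.coeff.support.filter (fun ij => ij.2 = jmin)).image Prod.fst).max' hA0 with hM0
  set m1 := ((p.coeff.support.filter (fun ij => ij.2 = jmax)).image Prod.fst).min' hA1 with hm1
  have hmaxrow : maxdeg (row p jmin) = M0 := by
    simp only [maxdeg, hrow, hM0, ← Finset.coe_max' hA0, WithBot.unbotD_coe]
  have hminrow : mindeg (row p jmax) = m1 := by
    simp only [mindeg, hrow, hm1, ← Finset.coe_min' hA1, WithTop.untopD_coe]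
  have hM0mem : (M0, jmin) ∈ p.coeff.support := by
    obtain ⟨a0, ha0f, ha0⟩ := Finset.mem_image.mp
      (((p.coeff.support.filter (fun ij => ij.2 = jmin)).image Prod.fst).max'_mem hA0)
    rw [Finset.mem_filter] at ha0f
    have : a0 = (M0, jmin) := Prod.ext ha0 ha0f.2
    exact this ▸ ha0f.1
  have hm1mem : (m1, jmax) ∈ p.coeff.support := by
    obtain ⟨a1, ha1f, ha1⟩ := Finset.mem_image.mp
      (((p.coeff.support.filter (fun ij => ij.2 = jmax)).image Prod.fst).min'_mem hA1)
    rw [Finset.mem_filter] at ha1f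
    have : a1 = (m1, jmax) := Prod.ext ha1 ha1f.2
    exact this ▸ ha1f.1
  have hjminle : ∀ ij ∈ p.coeff.support, jmin ≤ ij.2 := fun ij hij =>
    Finset.min'_le _ _ (Finset.mem_image.mpr ⟨ij, hij, rfl⟩)
  have hjmaxle : ∀ ij ∈ p.coeff.support, ij.2 ≤ jmax := fun ij hij =>
    Finset.le_max' _ _ (Finset.mem_image.mpr ⟨ij, hij, rfl⟩)
  have hmax : (specPow c p).coeff.support.max = ((M0 + c * jmin : ℤ) : WithBot ℤ) := by
    apply le_antisymm
    · apply Finset.max_le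
      intro k hk
      rw [hsupp, Finset.mem_image] at hk
      obtain ⟨ij, hij, rfl⟩ := hk
      rcases eq_or_lt_of_le (hjminle ij hij) with h | h
      · have h1 : ij.1 ≤ M0 := Finset.le_max' _ _
          (Finset.mem_image.mpr ⟨ij, Finset.mem_filter.mpr ⟨hij, h.symm⟩, rfl⟩)
        exact_mod_cast by rw [← h]; linarith
      · exact_mod_cast le_of_lt (hc (M0, jmin) hM0mem ij hij h)
    · exact Finset.le_max (by rw [hsupp]; exact Finset.mem_image.mpr ⟨(M0, jmin), hM0mem, rfl⟩)
  have hmin : (specPow c p).coeff.support.min = ((m1 + c * jmax : ℤ) : WithTop ℤ) := by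
    apply le_antisymm
    · exact Finset.min_le (by rw [hsupp]; exact Finset.mem_image.mpr ⟨(m1, jmax), hm1mem, rfl⟩)
    · apply Finset.le_min
      intro k hk
      rw [hsupp, Finset.mem_image] at hk
      obtain ⟨ij, hij, rfl⟩ := hk
      rcases eq_or_lt_of_le (hjmaxle ij hij) with h | h
      · have h1 : m1 ≤ ij.1 := Finset.min'_le _ _
          (Finset.mem_image.mpr ⟨ij, Finset.mem_filter.mpr ⟨hij, h⟩, rfl⟩)
        exact_mod_cast by rw [h]; linarith
      · exact_mod_cast le_of_lt (hc ij hij (m1, jmax) hm1mem h)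
  refine ⟨hne, ?_⟩
  rw [breadth, maxdeg, mindeg, hmax, hmin, WithBot.unbotD_coe, WithTop.untopD_coe,
    hymin, hymax, hmaxrow, hminrow]

/-- The breadth computation used in the proofs of Theorem 2.1(3) and Proposition 1.9:
if `p` is a nonzero two-variable Laurent polynomial with `y`-breadth `ℓ ≥ 1`,
`j₀` is the minimal `y`-exponent of `p`, `ω ≥ 1`, and
`C = maxdeg(a_{j₀}) − mindeg(a_{j₀+ℓ})`, then for all sufficiently large `n` the
specialization `p(t, t^{−nω})` is nonzero with breadth exactly `n·ω·ℓ + C`; in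
particular the breadth of `p(t, t^{−nω})` tends to infinity as `n → ∞`. -/
theorem breadth_specPow_eventually_linear (p : AddMonoidAlgebra ℤ (ℤ × ℤ)) (hp : p ≠ 0)
    (hℓ : 1 ≤ ybreadth p) (ω : ℤ) (hω : 1 ≤ ω) :
    (∃ N : ℤ, ∀ n : ℤ, N ≤ n →
        specPow (-(n * ω)) p ≠ 0 ∧
        breadth (specPow (-(n * ω)) p) =
          n * ω * ybreadth p +
            (maxdeg (row p (ymin p)) - mindeg (row p (ymin p + ybreadth p)))) ∧
    Filter.Tendsto (fun n : ℤ => breadth (specPow (-(n * ω)) p))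
      Filter.atTop Filter.atTop := by
  classical
  have hS : p.coeff.support.Nonempty := Finsupp.support_nonempty_iff.mpr (mt AddMonoidAlgebra.coeff_eq_zero.mp hp)
  have hI : (p.coeff.support.image Prod.fst).Nonempty := hS.image _
  set imin := (p.coeff.support.image Prod.fst).min' hI with himin
  set imax := (p.coeff.support.image Prod.fst).max' hI with himax
  have himm : imin ≤ imax :=
    Finset.min'_le _ _ ((p.coeff.support.image Prod.fst).max'_mem hI)
  have hyb : ymin p + ybreadth p = ymax p := by simp only [ybreadth]; ring
  set C := maxdeg (row p (ymin p)) - mindeg (row p (ymin p + ybreadth p)) with hC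
  have hmain : ∀ n : ℤ, imax - imin + 1 ≤ n →
      specPow (-(n * ω)) p ≠ 0 ∧
      breadth (specPow (-(n * ω)) p) = n * ω * ybreadth p + C := by
    intro n hn
    have hc : ∀ ij ∈ p.coeff.support, ∀ ij' ∈ p.coeff.support, ij.2 < ij'.2 →
        ij'.1 + (-(n * ω)) * ij'.2 < ij.1 + (-(n * ω)) * ij.2 := by
      intro ij hij ij' hij' hlt
      have h1 : ij'.1 ≤ imax :=
        Finset.le_max' _ _ (Finset.mem_image.mpr ⟨ij', hij', rfl⟩)
      have h2 : imin ≤ ij.1 :=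
        Finset.min'_le _ _ (Finset.mem_image.mpr ⟨ij, hij, rfl⟩)
      have hd : 1 ≤ ij'.2 - ij.2 := by omega
      have hn1 : (1 : ℤ) ≤ n := by omega
      have hnω : (0 : ℤ) ≤ n * ω := mul_nonneg (by omega) (by omega)
      have hA : n * ω * 1 ≤ n * ω * (ij'.2 - ij.2) :=
        mul_le_mul_of_nonneg_left hd hnω
      have hB : n * 1 ≤ n * ω := mul_le_mul_of_nonneg_left hω (by omega)
      nlinarith [hA, hB]
    obtain ⟨hne, hbr⟩ := spec_key p hp (-(n * ω)) hc
    refine ⟨hne, ?_⟩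
    rw [hC, hyb, hbr]
    simp only [ybreadth]
    ring
  refine ⟨⟨imax - imin + 1, hmain⟩, ?_⟩
  rw [Filter.tendsto_atTop]
  intro b
  rw [Filter.eventually_atTop]
  refine ⟨max (imax - imin + 1) (max 1 (b - C)), fun n hn => ?_⟩
  have hn1 : imax - imin + 1 ≤ n := le_trans (le_max_left _ _) hn
  have hn2 : (1 : ℤ) ≤ n := le_trans ((le_max_left _ _).trans (le_max_right _ _)) hn
  have hn3 : b - C ≤ n := le_trans ((le_max_right _ _).trans (le_max_right _ _)) hn
  rw [(hmain n hn1).2]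
  have hnω : (0 : ℤ) ≤ n * ω := mul_nonneg (by omega) (by omega)
  have hA : n * ω * 1 ≤ n * ω * ybreadth p := mul_le_mul_of_nonneg_left hℓ hnω
  have hB : n * 1 ≤ n * ω := mul_le_mul_of_nonneg_left hω (by omega)
  linarith [hA, hB]
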